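/- Let Φ = {φ_n}_{n=1}^N ⊆ ℂ^M, define the super analysis operator 𝐀 on M×M complex self-adjoint matrices by (𝐀H)(n) = ⟨H, φ_n φ_n*⟩_HS = trace(φ_n φ_n* H). Then the intensity measurement map A(x) = (|⟨x,φ_n⟩|²)_n is not injective modulo 𝕋 if and only if the null space of 𝐀 contains a nonzero self-adjoint matrix of rank 1 or rank 2. -/

import Mathlib

open Matrix

lemma trace_vecMulVec_mul {M' : ℕ} (φ : Fin M' → ℂ) (H : Matrix (Fin M') (Fin M') ℂ) :
    (Matrix.vecMulVec φ (star φ) * H).trace = star φ ⬝ᵥ (H *ᵥ φ) := by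
  simp only [trace, diag, mul_apply, vecMulVec_apply, dotProduct, mulVec, Pi.star_apply]
  rw [Finset.sum_comm]
  congr 1; ext j
  rw [Finset.mul_sum]
  congr 1; ext i
  ring

lemma quad_vecMulVec {M' : ℕ} (φ x : Fin M' → ℂ) :
    star φ ⬝ᵥ (Matrix.vecMulVec x (star x) *ᵥ φ) = ((‖star φ ⬝ᵥ x‖ : ℂ)) ^ 2 := by
  have h1 : star φ ⬝ᵥ (Matrix.vecMulVec x (star x) *ᵥ φ) = (star φ ⬝ᵥ x) * (star x ⬝ᵥ φ) := by
    simp only [dotProduct, mulVec, vecMulVec_apply, Pi.star_apply, Finset.mul_sum, Finset.sum_mul]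
    rw [Finset.sum_comm]
    exact Finset.sum_congr rfl fun i _ => Finset.sum_congr rfl fun j _ => by ring
  have h2 : star x ⬝ᵥ φ = star (star φ ⬝ᵥ x) := by
    rw [star_dotProduct]
  rw [h1, h2, show star (star φ ⬝ᵥ x) = (starRingEnd ℂ) (star φ ⬝ᵥ x) from rfl,
    Complex.mul_conj']

lemma rank_sub_vecMulVec_le {M' : ℕ} (x y : Fin M' → ℂ) :
    (Matrix.vecMulVec x (star x) - Matrix.vecMulVec y (star y)).rank ≤ 2 := by
  set C : Matrix (Fin M') (Fin 2) ℂ := Matrix.of fun i k => if k = 0 then x i else y i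
  set R : Matrix (Fin 2) (Fin M') ℂ := Matrix.of fun k j => if k = 0 then star x j else -(star y j)
  have hCR : Matrix.vecMulVec x (star x) - Matrix.vecMulVec y (star y) = C * R := by
    ext i j
    simp [C, R, mul_apply, Fin.sum_univ_two, vecMulVec_apply]
    ring
  rw [hCR]
  calc (C * R).rank ≤ C.rank := Matrix.rank_mul_le_left C R
    _ ≤ Fintype.card (Fin 2) := Matrix.rank_le_card_width C
    _ = 2 := by simp

lemma one_le_rank_of_ne_zero {M' : ℕ} (H : Matrix (Fin M') (Fin M') ℂ) (h : H ≠ 0) :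
    1 ≤ H.rank := by
  rw [Nat.one_le_iff_ne_zero]
  intro hr
  apply h
  have h0 : LinearMap.range H.mulVecLin = ⊥ := by
    rw [Matrix.rank] at hr
    exact Submodule.finrank_eq_zero.mp hr
  rw [LinearMap.range_eq_bot] at h0
  ext i j
  have hz : H *ᵥ Pi.single j 1 = 0 := by
    have := congrFun (congrArg DFunLike.coe h0) (Pi.single j 1)
    simpa using this
  have h2 := congrFun hz i
  simpa [Matrix.mulVec_single] using h2

lemma herm_sub_vecMulVec {M' : ℕ} (x y : Fin M' → ℂ) :
    (Matrix.vecMulVec x (star x) - Matrix.vecMulVec y (star y)).IsHermitian := by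
  have h : ∀ z : Fin M' → ℂ, (Matrix.vecMulVec z (star z)).IsHermitian := by
    intro z
    ext i j
    simp [conjTranspose_apply, vecMulVec_apply, mul_comm]
  exact (h x).sub (h y)

lemma exists_phase_of_vecMulVec_eq {M' : ℕ} (x y : Fin M' → ℂ)
    (h : Matrix.vecMulVec x (star x) = Matrix.vecMulVec y (star y)) :
    ∃ c : ℂ, ‖c‖ = 1 ∧ y = c • x := by
  have he : ∀ i j, x i * star (x j) = y i * star (y j) := by
    intro i j
    have := congrFun (congrFun h i) j
    simpa [vecMulVec_apply] using this
  by_cases hx : x = 0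
  · refine ⟨1, by simp, ?_⟩
    subst hx
    ext i
    have h0 := (he i i).symm
    simp only [Pi.zero_apply, mul_zero, zero_mul] at h0
    rw [show star (y i) = (starRingEnd ℂ) (y i) from rfl, Complex.mul_conj'] at h0
    norm_cast at h0
    simp only [Pi.smul_apply, Pi.zero_apply, smul_zero]
    have : ‖y i‖ = 0 := by nlinarith [norm_nonneg (y i)]
    simpa using this
  · obtain ⟨i, hi⟩ : ∃ i, x i ≠ 0 := by
      by_contra hc; push_neg at hc; exact hx (funext hc)
    have hnorm : ‖x i‖ = ‖y i‖ := by
      have h0 := he i i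
      rw [show star (x i) = (starRingEnd ℂ) (x i) from rfl,
        show star (y i) = (starRingEnd ℂ) (y i) from rfl,
        Complex.mul_conj', Complex.mul_conj'] at h0
      norm_cast at h0
      nlinarith [norm_nonneg (x i), norm_nonneg (y i)]
    have hyi : y i ≠ 0 := by
      intro h0
      rw [h0, norm_zero] at hnorm
      exact hi (norm_eq_zero.mp hnorm)
    refine ⟨y i / x i, ?_, ?_⟩
    · rw [norm_div, ← hnorm, div_self (norm_ne_zero_iff.mpr hi)]
    · ext j
      have hji : x j * (starRingEnd ℂ) (x i) = y j * (starRingEnd ℂ) (y i) := he j i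
      have hii : x i * (starRingEnd ℂ) (x i) = y i * (starRingEnd ℂ) (y i) := he i i
      have hstarx : (starRingEnd ℂ) (x i) ≠ 0 := by simpa using hi
      have key : (starRingEnd ℂ) (x i) * (y j * x i) = (starRingEnd ℂ) (x i) * (x j * y i) := by
        linear_combination y j * hii - y i * hji
      have key2 : y j * x i = x j * y i := mul_left_cancel₀ hstarx key
      simp only [Pi.smul_apply, smul_eq_mul]
      field_simp
      linear_combination key2

lemma quad_spectral {M' : ℕ} (H : Matrix (Fin M') (Fin M') ℂ) (hH : H.IsHermitian)
    (φ : Fin M' → ℂ) :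
    star φ ⬝ᵥ (H *ᵥ φ) =
      ∑ i, ((hH.eigenvalues i : ℂ) *
        ((‖(star (hH.eigenvectorUnitary : Matrix (Fin M') (Fin M') ℂ) *ᵥ φ) i‖ : ℂ)) ^ 2) := by
  set U : Matrix (Fin M') (Fin M') ℂ := (hH.eigenvectorUnitary : Matrix (Fin M') (Fin M') ℂ)
    with hU
  set w : Fin M' → ℂ := star U *ᵥ φ with hw
  conv_lhs => rw [hH.spectral_theorem, Unitary.conjStarAlgAut_apply]
  rw [← hU]
  rw [← Matrix.mulVec_mulVec, ← Matrix.mulVec_mulVec]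
  rw [Matrix.dotProduct_mulVec]
  have hsw : star φ ᵥ* U = star w := by
    rw [hw, Matrix.star_mulVec]
    exact (Matrix.conjTranspose_conjTranspose U).symm ▸ rfl
  rw [hsw]
  simp only [dotProduct, Matrix.mulVec_diagonal, Pi.star_apply, Function.comp]
  refine Finset.sum_congr rfl fun i _ => ?_
  rw [show (star (w i) : ℂ) = (starRingEnd ℂ) (w i) from rfl]
  rw [mul_comm ((starRingEnd ℂ) (w i)), mul_assoc, Complex.mul_conj']
  rfl

lemma ortho_cols {M' : ℕ} (H : Matrix (Fin M') (Fin M') ℂ) (hH : H.IsHermitian) (p q : Fin M') :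
    star (fun j => (hH.eigenvectorUnitary : Matrix (Fin M') (Fin M') ℂ) j p) ⬝ᵥ
      (fun j => (hH.eigenvectorUnitary : Matrix (Fin M') (Fin M') ℂ) j q)
      = if p = q then 1 else 0 := by
  set U : Matrix (Fin M') (Fin M') ℂ := (hH.eigenvectorUnitary : Matrix (Fin M') (Fin M') ℂ)
  have h1 : star U * U = 1 := Matrix.mem_unitaryGroup_iff'.mp hH.eigenvectorUnitary.2
  have h2 := congrFun (congrFun h1 p) q
  simp only [mul_apply, one_apply] at h2
  rw [← h2]
  simp [dotProduct, conjTranspose_apply]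

theorem stmt_9 (M N : ℕ) (Φ : Fin N → Fin M → ℂ) :
    (¬ ∀ x y : Fin M → ℂ,
        (∀ n, ‖star (Φ n) ⬝ᵥ x‖ ^ 2 = ‖star (Φ n) ⬝ᵥ y‖ ^ 2) →
        ∃ c : ℂ, ‖c‖ = 1 ∧ y = c • x)
      ↔ ∃ H : Matrix (Fin M) (Fin M) ℂ, H.IsHermitian ∧ H ≠ 0 ∧
          (H.rank = 1 ∨ H.rank = 2) ∧
          ∀ n, (Matrix.vecMulVec (Φ n) (star (Φ n)) * H).trace = 0 := by
  constructor
  · intro hnot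
    push_neg at hnot
    obtain ⟨x, y, hmeas, hnc⟩ := hnot
    set H : Matrix (Fin M) (Fin M) ℂ :=
      Matrix.vecMulVec x (star x) - Matrix.vecMulVec y (star y) with hHdef
    have hHerm : H.IsHermitian := herm_sub_vecMulVec x y
    have hHne : H ≠ 0 := by
      intro h0
      have heq : Matrix.vecMulVec x (star x) = Matrix.vecMulVec y (star y) :=
        sub_eq_zero.mp h0
      obtain ⟨c, hc, hyc⟩ := exists_phase_of_vecMulVec_eq x y heq
      exact hnc c hc hyc
    refine ⟨H, hHerm, hHne, ?_, ?_⟩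
    · have h1 : 1 ≤ H.rank := one_le_rank_of_ne_zero H hHne
      have h2 : H.rank ≤ 2 := rank_sub_vecMulVec_le x y
      omega
    · intro n
      rw [trace_vecMulVec_mul]
      rw [hHdef, Matrix.sub_mulVec, dotProduct_sub, quad_vecMulVec, quad_vecMulVec]
      rw [sub_eq_zero]
      norm_cast
      rw [hmeas n]
  · rintro ⟨H, hH, hne, hrank, htr⟩
    intro hall
    set U : Matrix (Fin M) (Fin M) ℂ := (hH.eigenvectorUnitary : Matrix (Fin M) (Fin M) ℂ)
      with hUdef
    set lam : Fin M → ℝ := hH.eigenvalues with hlam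
    set u : Fin M → Fin M → ℂ := fun p => (fun j => U j p) with hu
    set w : Fin N → Fin M → ℂ := fun n => star U *ᵥ Φ n with hwdef
    -- orthonormality
    have horth : ∀ p q, star (u p) ⬝ᵥ u q = if p = q then 1 else 0 :=
      fun p q => ortho_cols H hH p q
    -- measurement norm identity
    have hdotu : ∀ n p, ‖star (Φ n) ⬝ᵥ u p‖ = ‖w n p‖ := by
      intro n p
      have h1 : star (u p) ⬝ᵥ Φ n = w n p := by
        simp [hwdef, hu, mulVec, dotProduct, conjTranspose_apply]
      rw [show star (Φ n) ⬝ᵥ u p = star (star (u p) ⬝ᵥ Φ n) from star_dotProduct _ _, h1,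
        norm_star]
    -- the real sum identity
    have hsum : ∀ n, ∑ i, lam i * ‖w n i‖ ^ 2 = 0 := by
      intro n
      have h1 := htr n
      rw [trace_vecMulVec_mul, quad_spectral H hH] at h1
      have h2 : ((∑ i, lam i * ‖w n i‖ ^ 2 : ℝ) : ℂ) = 0 := by
        rw [← h1]
        push_cast
        rfl
      exact_mod_cast h2
    -- rank facts
    have hcard : Fintype.card {i // lam i ≠ 0} = H.rank := (hH.rank_eq_card_non_zero_eigs).symm
    have hcard2 : Fintype.card {i // lam i ≠ 0} ≤ 2 := by
      rcases hrank with h | h <;> omega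
    have hex : ∃ p, lam p ≠ 0 := by
      have h1 : 1 ≤ H.rank := one_le_rank_of_ne_zero H hne
      have : 0 < Fintype.card {i // lam i ≠ 0} := by omega
      obtain ⟨⟨p, hp⟩⟩ := Fintype.card_pos_iff.mp this
      exact ⟨p, hp⟩
    by_cases hposneg : (∃ p, 0 < lam p) ∧ (∃ q, lam q < 0)
    · -- indefinite case
      obtain ⟨⟨p, hp⟩, ⟨q, hq⟩⟩ := hposneg
      have hpq : p ≠ q := fun h => by rw [h] at hp; linarith
      have hzero : ∀ i, i ≠ p → i ≠ q → lam i = 0 := by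
        intro i hip hiq
        by_contra hi
        have hsubset : ({p, q, i} : Finset (Fin M)) ⊆
            Finset.univ.filter (fun j => lam j ≠ 0) := by
          intro j hj
          simp only [Finset.mem_insert, Finset.mem_singleton] at hj
          simp only [Finset.mem_filter, Finset.mem_univ, true_and]
          rcases hj with rfl | rfl | rfl
          · exact ne_of_gt hp
          · exact ne_of_lt hq
          · exact hi
        have hc3 : ({p, q, i} : Finset (Fin M)).card = 3 := by
          rw [Finset.card_insert_of_notMem, Finset.card_insert_of_notMem, Finset.card_singleton]
          · simpa using hiq.symm
          · simp only [Finset.mem_insert, Finset.mem_singleton]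
            push_neg
            exact ⟨hpq, hip.symm⟩
        have := Finset.card_le_card hsubset
        rw [hc3] at this
        rw [Fintype.card_subtype] at hcard2
        omega
      have hsum2 : ∀ n, lam p * ‖w n p‖ ^ 2 + lam q * ‖w n q‖ ^ 2 = 0 := by
        intro n
        have h1 := hsum n
        rw [← Finset.sum_subset (Finset.subset_univ ({p, q} : Finset (Fin M)))] at h1
        · rwa [Finset.sum_pair hpq] at h1
        · intro i _ hi
          simp only [Finset.mem_insert, Finset.mem_singleton] at hi
          push_neg at hi
          rw [hzero i hi.1 hi.2, zero_mul]
      set x : Fin M → ℂ := ((Real.sqrt (lam p) : ℝ) : ℂ) • u p with hx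
      set y : Fin M → ℂ := ((Real.sqrt (-lam q) : ℝ) : ℂ) • u q with hy
      have hmeas : ∀ n, ‖star (Φ n) ⬝ᵥ x‖ ^ 2 = ‖star (Φ n) ⬝ᵥ y‖ ^ 2 := by
        intro n
        rw [hx, hy, dotProduct_smul, dotProduct_smul, norm_smul, norm_smul]
        rw [hdotu, hdotu]
        rw [mul_pow, mul_pow]
        rw [Complex.norm_real, Real.norm_eq_abs, Complex.norm_real, Real.norm_eq_abs,
          sq_abs, sq_abs, Real.sq_sqrt (le_of_lt hp), Real.sq_sqrt (by linarith : 0 ≤ -lam q)]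
        have := hsum2 n
        linarith
      obtain ⟨c, hc, hyc⟩ := hall x y hmeas
      have h1 : star (u q) ⬝ᵥ y = ((Real.sqrt (-lam q) : ℝ) : ℂ) := by
        rw [hy, dotProduct_smul, horth q q]
        simp
      have h2 : star (u q) ⬝ᵥ y = 0 := by
        rw [hyc, dotProduct_smul, hx, dotProduct_smul, horth q p, if_neg (Ne.symm hpq)]
        simp
      rw [h1] at h2
      have : Real.sqrt (-lam q) = 0 := by exact_mod_cast h2
      have := Real.sqrt_eq_zero (by linarith : 0 ≤ -lam q) |>.mp this
      linarith
    · -- semidefinite case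
      obtain ⟨p, hp⟩ := hex
      have hwzero : ∀ n, w n p = 0 := by
        intro n
        rcases not_and_or.mp hposneg with h | h
        · push_neg at h
          -- all eigenvalues ≤ 0
          have hterm : ∀ i ∈ Finset.univ, 0 ≤ (-lam i) * ‖w n i‖ ^ 2 := by
            intro i _
            exact mul_nonneg (by linarith [h i]) (by positivity)
          have hsumneg : ∑ i, (-lam i) * ‖w n i‖ ^ 2 = 0 := by
            have := hsum n
            have h2 : ∑ i, (-lam i) * ‖w n i‖ ^ 2 = -∑ i, lam i * ‖w n i‖ ^ 2 := by
              rw [← Finset.sum_neg_distrib]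
              exact Finset.sum_congr rfl fun i _ => by ring
            rw [h2, this, neg_zero]
          have := (Finset.sum_eq_zero_iff_of_nonneg hterm).mp hsumneg p (Finset.mem_univ p)
          have hlp : lam p < 0 := lt_of_le_of_ne (h p) hp
          have hn : ‖w n p‖ ^ 2 = 0 := by
            have hne' : -lam p ≠ 0 := by linarith
            exact (mul_eq_zero.mp this).resolve_left hne'
          rw [pow_eq_zero_iff (by norm_num)] at hn
          exact norm_eq_zero.mp hn
        · push_neg at h
          -- all eigenvalues ≥ 0
          have hterm : ∀ i ∈ Finset.univ, 0 ≤ lam i * ‖w n i‖ ^ 2 := by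
            intro i _
            exact mul_nonneg (h i) (by positivity)
          have := (Finset.sum_eq_zero_iff_of_nonneg hterm).mp (hsum n) p (Finset.mem_univ p)
          have hn : ‖w n p‖ ^ 2 = 0 := (mul_eq_zero.mp this).resolve_left hp
          rw [pow_eq_zero_iff (by norm_num)] at hn
          exact norm_eq_zero.mp hn
      have hmeas : ∀ n, ‖star (Φ n) ⬝ᵥ u p‖ ^ 2 = ‖star (Φ n) ⬝ᵥ (0 : Fin M → ℂ)‖ ^ 2 := by
        intro n
        rw [hdotu, hwzero n]
        simp
      obtain ⟨c, hc, hyc⟩ := hall (u p) 0 hmeas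
      have h1 : star (u p) ⬝ᵥ (0 : Fin M → ℂ) = 0 := by simp
      have h2 : star (u p) ⬝ᵥ (c • u p) = c := by
        rw [dotProduct_smul, horth p p]
        simp
      rw [hyc, h2] at h1
      rw [h1, norm_zero] at hc
      norm_num at hc
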